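/- Let α be a fixed-point-free involution of [2n] such that α restricts to involutions of H₁ = {1, …, 2k} and H₂ = {2k+1, …, 2n}. If γ₁ = α|_{H₁} ∘ σ₁ is a single cycle on H₁ (so ([2k], α|_{H₁}, σ₁) is a unicellular map of genus g₁) and similarly ([2(n−k)], α|_{H₂}, σ₂) is a unicellular map of genus g₂, and one glues the two maps along an edge as in the gluing construction θ (joining the plant vertex of the first map into the minimal vertex of the second), then the resulting map is unicellular and its genus equals g₁ + g₂. -/

import Mathlib

/-- Number of cycles of a permutation, counting fixed points as trivial cycles. -/
def cycleCount {β : Type*} [Fintype β] [DecidableEq β] (σ : Equiv.Perm β) : ℕ :=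
  σ.cycleType.card + (Finset.univ.filter fun x => σ x = x).card

/-- `IsPUMap g n α σ`: `(α, σ)` is a planted unicellular map of genus `g` with `n` edges.
The `2n+2` half-edges are `Fin (2*n+2)`, listed in boundary order: index `0` is the root
half-edge `1_R`, index `i` (for `1 ≤ i ≤ 2n`) is the half-edge labelled `i`, and index
`2n+1` is the plant half-edge `2n_R`.  `α` is a fixed-point-free involution containing
the rainbow cycle `(1_R, 2n_R)`, the boundary (face) permutation `γ = α ∘ σ` is the
single cycle `(1_R, 1, 2, …, 2n, 2n_R)`, i.e. the standard rotation `finRotate`, and the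
genus is given by Euler's relation `2 - 2g = (J - 1) - n + 1`, where
`J = cycleCount σ` counts the vertices of the map including the plant. -/
def IsPUMap (g n : ℕ) (α σ : Equiv.Perm (Fin (2 * n + 2))) : Prop :=
  (∀ x, α (α x) = x) ∧ (∀ x, α x ≠ x) ∧
  α ⟨0, by omega⟩ = ⟨2 * n + 1, by omega⟩ ∧
  α * σ = finRotate (2 * n + 2) ∧
  ((cycleCount σ : ℤ) - 1) - n + 1 = 2 - 2 * (g : ℤ)

/-- A planted unicellular map of genus `g` with `n` edges. -/
structure PUMap (g n : ℕ) where
  α : Equiv.Perm (Fin (2 * n + 2))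
  σ : Equiv.Perm (Fin (2 * n + 2))
  prop : IsPUMap g n α σ

/-- The embedding of the half-edges of the second map `u₂` into the glued map: the root
`1_{R_{u₂}}` goes to position `0` and the remaining half-edges of `u₂` follow the
`2k+2` half-edges of `u₁` (which occupy positions `1,…,2k+2`). -/
def glue2 (k : ℕ) (i : ℕ) : ℕ := if i = 0 then 0 else i + (2 * k + 2)

set_option linter.unusedSectionVars false
set_option maxHeartbeats 8000000

section AuxCycle
open Equiv Equiv.Perm
variable {β γ : Type*} [Fintype β] [DecidableEq β] [Fintype γ] [DecidableEq γ]

lemma cycleType_permCongr (e : β ≃ γ) (p : Equiv.Perm β) :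
    (e.permCongr p).cycleType = p.cycleType := by
  have hext : e.permCongr p
      = p.extendDomain (e.trans (Equiv.subtypeUnivEquiv (fun _ : γ => trivial)).symm) := by
    ext x
    rw [Equiv.Perm.extendDomain_apply_subtype _ _ trivial]
    simp
  rw [hext, Equiv.Perm.cycleType_extendDomain]

def eLeft (β γ : Type*) : β ≃ {x : β ⊕ γ // x.isLeft} where
  toFun := fun a => ⟨Sum.inl a, rfl⟩
  invFun := fun x => x.1.getLeft x.2
  left_inv := fun a => rfl
  right_inv := by
    rintro ⟨a | b, h⟩
    · rfl
    · simp at h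

lemma cycleType_sumCongr_one_right (p : Equiv.Perm β) :
    (Equiv.Perm.sumCongr p (1 : Equiv.Perm γ)).cycleType = p.cycleType := by
  have hext : Equiv.Perm.sumCongr p (1 : Equiv.Perm γ) = p.extendDomain (eLeft β γ) := by
    ext x
    cases x with
    | inl a =>
        rw [Equiv.Perm.extendDomain_apply_subtype _ (eLeft β γ) (by rfl : (Sum.inl a : β ⊕ γ).isLeft = true)]
        rfl
    | inr b =>
        rw [Equiv.Perm.extendDomain_apply_not_subtype _ (eLeft β γ) (by simp)]
        rfl
  rw [hext, Equiv.Perm.cycleType_extendDomain]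

lemma cycleType_sumCongr (p : Equiv.Perm β) (q : Equiv.Perm γ) :
    (Equiv.Perm.sumCongr p q).cycleType = p.cycleType + q.cycleType := by
  have h1 : Equiv.Perm.sumCongr p q
      = Equiv.Perm.sumCongr p (1 : Equiv.Perm γ) * Equiv.Perm.sumCongr (1 : Equiv.Perm β) q := by
    rw [Equiv.Perm.sumCongr_mul, mul_one, one_mul]
  have hd : Equiv.Perm.Disjoint (Equiv.Perm.sumCongr p (1 : Equiv.Perm γ))
      (Equiv.Perm.sumCongr (1 : Equiv.Perm β) q) := by
    intro x
    cases x with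
    | inl a => right; rfl
    | inr b => left; rfl
  have h2 : Equiv.Perm.sumCongr (1 : Equiv.Perm β) q
      = (Equiv.sumComm γ β).permCongr (Equiv.Perm.sumCongr q (1 : Equiv.Perm β)) := by
    ext x
    cases x with
    | inl a => rfl
    | inr b => rfl
  rw [h1, hd.cycleType_mul, cycleType_sumCongr_one_right, h2, cycleType_permCongr,
    cycleType_sumCongr_one_right]

lemma cycleCount_sumCongr (p : Equiv.Perm β) (q : Equiv.Perm γ) :
    cycleCount (Equiv.Perm.sumCongr p q) = cycleCount p + cycleCount q := by
  unfold cycleCount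
  rw [cycleType_sumCongr, Multiset.card_add]
  have hcard : (Finset.univ.filter fun x => Equiv.Perm.sumCongr p q x = x).card
      = (Finset.univ.filter fun a => p a = a).card + (Finset.univ.filter fun b => q b = b).card := by
    rw [← Fintype.card_subtype, ← Fintype.card_subtype, ← Fintype.card_subtype, ← Fintype.card_sum]
    refine Fintype.card_congr (Equiv.subtypeSum.trans (Equiv.sumCongr ?_ ?_))
    · exact Equiv.subtypeEquivRight (fun a => by simp)
    · exact Equiv.subtypeEquivRight (fun b => by simp)
  omega


lemma cycleCount_permCongr (e : β ≃ γ) (p : Equiv.Perm β) :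
    cycleCount (e.permCongr p) = cycleCount p := by
  unfold cycleCount
  rw [cycleType_permCongr]
  congr 1
  have himg : (Finset.univ.filter fun x => e.permCongr p x = x)
      = (Finset.univ.filter fun x => p x = x).image e := by
    ext x
    simp only [Finset.mem_filter]
    simp only [Finset.mem_univ, true_and, Finset.mem_image,
      Equiv.permCongr_apply, Finset.mem_filter]
    constructor
    · intro hx
      exact ⟨e.symm x, e.injective (by simpa using hx), by simp⟩
    · rintro ⟨y, hy, rfl⟩
      simp [hy]
  rw [himg, Finset.card_image_of_injective _ e.injective]

lemma auxSameCycle_trans (f g : Equiv.Perm β) (h : ∀ x, g.SameCycle x (f x)) {x y : β}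
    (hxy : f.SameCycle x y) : g.SameCycle x y := by
  obtain ⟨i, hlt, rfl⟩ := hxy.exists_pow_eq'
  clear hlt hxy
  induction i with
  | zero => exact Equiv.Perm.SameCycle.refl g x
  | succ n ih =>
      have hs : (f ^ (n + 1)) x = f ((f ^ n) x) := by
        rw [pow_succ', Equiv.Perm.mul_apply]
      rw [hs]
      exact ih.trans (h _)

lemma cycleCount_mul_swap (s : Equiv.Perm β) {a b : β} (hab : a ≠ b) (ha : s a = a) :
    cycleCount (s * Equiv.swap a b) + 1 = cycleCount s := by
  by_cases hb : s b = b
  · -- `b` also fixed: the swap merges two fixed points into a 2-cycle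
    have hd : Equiv.Perm.Disjoint s (Equiv.swap a b) := by
      intro x
      rcases eq_or_ne x a with rfl | hxa
      · left; exact ha
      rcases eq_or_ne x b with rfl | hxb
      · left; exact hb
      · right; exact Equiv.swap_apply_of_ne_of_ne hxa hxb
    have hct : (s * Equiv.swap a b).cycleType = s.cycleType + (Equiv.swap a b).cycleType :=
      hd.cycleType_mul
    have hctcard : Multiset.card ((Equiv.swap a b).cycleType) = 1 := by
      rw [(Equiv.Perm.isCycle_swap hab).cycleType]; rfl
    have hfix : (Finset.univ.filter fun x => (s * Equiv.swap a b) x = x)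
        = (Finset.univ.filter fun x => s x = x) \ {a, b} := by
      ext x
      simp only [Finset.mem_sdiff, Finset.mem_filter]
      simp only [Finset.mem_univ, true_and,
        Finset.mem_insert, Finset.mem_singleton, Equiv.Perm.mul_apply]
      rcases eq_or_ne x a with rfl | hxa
      · simp [Equiv.swap_apply_left, hb, hab.symm]
      rcases eq_or_ne x b with rfl | hxb
      · simp [Equiv.swap_apply_right, ha, hab]
      · simp [Equiv.swap_apply_of_ne_of_ne hxa hxb, hxa, hxb]
    have hsub : ({a, b} : Finset β) ⊆ Finset.univ.filter fun x => s x = x := by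
      intro x hx
      simp only [Finset.mem_insert, Finset.mem_singleton] at hx
      rcases hx with rfl | rfl <;> simp [ha, hb]
    have hcard2 : ({a, b} : Finset β).card = 2 := by
      rw [Finset.card_insert_of_notMem (by simpa using hab), Finset.card_singleton]
    have h2le := Finset.card_le_card hsub
    unfold cycleCount
    rw [hct, Multiset.card_add, hctcard, hfix, Finset.card_sdiff_of_subset hsub, hcard2]
    omega
  · -- `b` moved by `s`: the swap attaches `a` to the cycle of `b`
    set c := s.cycleOf b with hcdef
    have hc : c ∈ s.cycleFactorsFinset :=
      Equiv.Perm.cycleOf_mem_cycleFactorsFinset_iff.2 (Equiv.Perm.mem_support.2 hb)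
    obtain ⟨hcyc, hceq⟩ := Equiv.Perm.mem_cycleFactorsFinset_iff.1 hc
    have hsuppc : c.support ⊆ s.support := Equiv.Perm.support_cycleOf_le s b
    have hanc : a ∉ c.support := fun h => (Equiv.Perm.mem_support.1 (hsuppc h)) ha
    have hbc : b ∈ c.support :=
      Equiv.Perm.mem_support_cycleOf_iff.2
        ⟨Equiv.Perm.SameCycle.refl s b, Equiv.Perm.mem_support.2 hb⟩
    have hca : c a = a := Equiv.Perm.notMem_support.1 hanc
    set d := c⁻¹ * s with hddef
    have hs : s = c * d := by rw [hddef, ← mul_assoc, mul_inv_cancel, one_mul]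
    have hdfix : ∀ x, x ∈ c.support → d x = x := by
      intro x hx
      rw [hddef, Equiv.Perm.mul_apply, ← hceq x hx, Equiv.Perm.inv_def, Equiv.symm_apply_apply]
    have hda : d a = a := by
      rw [hddef, Equiv.Perm.mul_apply, ha]
      have h2 : a ∉ c⁻¹.support := by rwa [Equiv.Perm.support_inv]
      exact Equiv.Perm.notMem_support.1 h2
    have hdc : Equiv.Perm.Disjoint c d := by
      intro x
      by_cases hx : x ∈ c.support
      · right; exact hdfix x hx
      · left; exact Equiv.Perm.notMem_support.1 hx
    have hdb : d b = b := hdfix b hbc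
    have hdsw : Equiv.Perm.Disjoint d (Equiv.swap a b) := by
      intro x
      by_cases hxa : x = a
      · left; rw [hxa]; exact hda
      by_cases hxb : x = b
      · left; rw [hxb]; exact hdb
      · right; exact Equiv.swap_apply_of_ne_of_ne hxa hxb
    set c' := c * Equiv.swap a b with hc'def
    have hc'b : c' b = a := by
      rw [hc'def, Equiv.Perm.mul_apply, Equiv.swap_apply_right, hca]
    have hc'a : c' a = c b := by
      rw [hc'def, Equiv.Perm.mul_apply, Equiv.swap_apply_left]
    have hc'x : ∀ x, x ≠ a → x ≠ b → c' x = c x := by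
      intro x hxa hxb
      rw [hc'def, Equiv.Perm.mul_apply, Equiv.swap_apply_of_ne_of_ne hxa hxb]
    have hcbne : c b ≠ a := fun h => hanc (h ▸ Equiv.Perm.apply_mem_support.2 hbc)
    have hcbb : c b ≠ b := Equiv.Perm.mem_support.1 hbc
    have hsupp' : c'.support = insert a c.support := by
      ext x
      by_cases hxa : x = a
      · rw [hxa]
        exact iff_of_true (Equiv.Perm.mem_support.2 (by rw [hc'a]; exact hcbne))
          (Finset.mem_insert_self a _)
      by_cases hxb : x = b
      · rw [hxb]
        exact iff_of_true (Equiv.Perm.mem_support.2 (by rw [hc'b]; exact hab))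
          (Finset.mem_insert_of_mem hbc)
      · rw [Equiv.Perm.mem_support, hc'x x hxa hxb, Finset.mem_insert]
        simp [hxa, Equiv.Perm.mem_support]
    have htransfer : ∀ x, c'.SameCycle x (c x) := by
      intro x
      by_cases hxa : x = a
      · rw [hxa, hca]
      by_cases hxb : x = b
      · rw [hxb]
        have h1 : c'.SameCycle b (c' (c' b)) :=
          Equiv.Perm.sameCycle_apply_right.2 (Equiv.Perm.sameCycle_apply_right.2
            (Equiv.Perm.SameCycle.refl _ _))
        rwa [hc'b, hc'a] at h1
      · have h1 : c'.SameCycle x (c' x) :=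
          Equiv.Perm.sameCycle_apply_right.2 (Equiv.Perm.SameCycle.refl _ _)
        rwa [hc'x x hxa hxb] at h1
    have hcyc' : Equiv.Perm.IsCycle c' := by
      refine ⟨b, by rw [hc'b]; exact hab, ?_⟩
      intro y hy
      have hy' : y ∈ c'.support := Equiv.Perm.mem_support.2 hy
      rw [hsupp', Finset.mem_insert] at hy'
      rcases hy' with rfl | hy'
      · exact ⟨1, by simpa using hc'b⟩
      · exact auxSameCycle_trans c c' htransfer
          (hcyc.sameCycle (Equiv.Perm.mem_support.1 hbc) (Equiv.Perm.mem_support.1 hy'))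
    have hdisj' : Equiv.Perm.Disjoint c' d := by
      intro x
      by_cases hx : x ∈ c'.support
      · right
        rw [hsupp', Finset.mem_insert] at hx
        rcases hx with rfl | hx
        · exact hda
        · exact hdfix x hx
      · left; exact Equiv.Perm.notMem_support.1 hx
    have ht : s * Equiv.swap a b = c' * d := by
      rw [hs, hc'def]
      calc c * d * Equiv.swap a b = c * (d * Equiv.swap a b) := by rw [mul_assoc]
        _ = c * (Equiv.swap a b * d) := by rw [hdsw.commute.eq]
        _ = c * Equiv.swap a b * d := by rw [mul_assoc]
    have hcard' : c'.support.card = c.support.card + 1 := by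
      rw [hsupp', Finset.card_insert_of_notMem hanc]
    have hfix : (Finset.univ.filter fun x => (s * Equiv.swap a b) x = x)
        = (Finset.univ.filter fun x => s x = x).erase a := by
      ext x
      simp only [Finset.mem_erase, Finset.mem_filter]
      simp only [Finset.mem_univ, true_and,
        Equiv.Perm.mul_apply]
      by_cases hxa : x = a
      · rw [hxa, Equiv.swap_apply_left]
        constructor
        · intro h; exact absurd (s.injective (h.trans ha.symm)) (Ne.symm hab)
        · rintro ⟨h1, _⟩; exact absurd rfl h1
      by_cases hxb : x = b
      · rw [hxb, Equiv.swap_apply_right, ha]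
        constructor
        · intro h; exact absurd h hab
        · rintro ⟨_, h2⟩; exact absurd h2 hb
      · rw [Equiv.swap_apply_of_ne_of_ne hxa hxb]
        exact ⟨fun h => ⟨hxa, h⟩, fun h => h.2⟩
    have hamem : a ∈ Finset.univ.filter fun x => s x = x := by simp [ha]
    have hscard : Multiset.card s.cycleType = Multiset.card d.cycleType + 1 := by
      conv_lhs => rw [hs]
      rw [hdc.cycleType_mul, hcyc.cycleType]
      simp
    have h1card : Multiset.card ((c'.support.card : ℕ) ::ₘ 0 : Multiset ℕ) = 1 := by simp
    unfold cycleCount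
    rw [hfix, Finset.card_erase_of_mem hamem, ht, hdisj'.cycleType_mul, hcyc'.cycleType]
    have hpos : 0 < (Finset.univ.filter fun x => s x = x).card :=
      Finset.card_pos.2 ⟨a, hamem⟩
    simp only [Multiset.card_add, Multiset.coe_card, List.length_singleton, Multiset.card_singleton]
    omega
end AuxCycle

lemma finRotate_val_ne {m : ℕ} (x : Fin (m + 1)) (h : x.val ≠ m) :
    ((finRotate (m + 1)) x).val = x.val + 1 :=
  coe_finRotate_of_ne_last (fun hl => h (by rw [hl]; rfl))

lemma finRotate_val_last {m : ℕ} (x : Fin (m + 1)) (h : x.val = m) :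
    ((finRotate (m + 1)) x).val = 0 := by
  have hx : x = Fin.last m := Fin.ext (by simpa using h)
  rw [hx, finRotate_last]
  rfl

lemma glue2_zero (k : ℕ) : glue2 k 0 = 0 := rfl

lemma glue2_pos (k i : ℕ) (h : i ≠ 0) : glue2 k i = i + (2 * k + 2) := by
  unfold glue2; rw [if_neg h]

lemma glue2_lt {n k i : ℕ} (hk : k ≤ n) (hi : i < 2 * (n - k) + 2) :
    glue2 k i < 2 * (n + 1) + 2 := by
  unfold glue2; split <;> omega

def gluePartition (n k : ℕ) (hk : k ≤ n) :
    (Fin (2 * k + 2) ⊕ Fin (2 * (n - k) + 2)) → Fin (2 * (n + 1) + 2) :=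
  Sum.elim (fun i => ⟨i.val + 1, by have := i.isLt; omega⟩)
    (fun i => ⟨glue2 k i.val, glue2_lt hk i.isLt⟩)

lemma gluePartition_bijective (n k : ℕ) (hk : k ≤ n) :
    Function.Bijective (gluePartition n k hk) := by
  rw [Fintype.bijective_iff_injective_and_card]
  constructor
  · rintro (i | i) (j | j) h <;>
      simp only [gluePartition, Sum.elim_inl, Sum.elim_inr, Fin.mk.injEq] at h
    · exact congrArg Sum.inl (Fin.ext (by omega))
    · exfalso; have := i.isLt; have := j.isLt; revert h; unfold glue2; split <;> omega
    · exfalso; have := i.isLt; have := j.isLt; revert h; unfold glue2; split <;> omega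
    · have hv : i.val = j.val := by
        have := i.isLt; have := j.isLt
        revert h; unfold glue2; split <;> split <;> omega
      exact congrArg Sum.inr (Fin.ext hv)
  · simp only [Fintype.card_sum, Fintype.card_fin]; omega

noncomputable def glueEquiv (n k : ℕ) (hk : k ≤ n) :
    (Fin (2 * k + 2) ⊕ Fin (2 * (n - k) + 2)) ≃ Fin (2 * (n + 1) + 2) :=
  Equiv.ofBijective _ (gluePartition_bijective n k hk)

lemma glueEquiv_inl_val (n k : ℕ) (hk : k ≤ n) (i : Fin (2 * k + 2)) :
    (glueEquiv n k hk (Sum.inl i) : ℕ) = i.val + 1 := rfl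

lemma glueEquiv_inr_val (n k : ℕ) (hk : k ≤ n) (i : Fin (2 * (n - k) + 2)) :
    (glueEquiv n k hk (Sum.inr i) : ℕ) = glue2 k i.val := rfl

attribute [irreducible] glueEquiv gluePartition


/-- Let `u₁` be a planted unicellular map of genus `g₁` with `k` edges and
`u₂` one of genus `g₂` with `n-k` edges.  Glue the plant of `u₁` into the first vertex of
`u₂`: on half-edges, the `2k+2` half-edges of `u₁` are embedded as positions `1,…,2k+2`
of `Fin (2*(n+1)+2)` (hypothesis `hA₁`, so the rainbow of `u₁` becomes a genuine edge)
and the half-edges of `u₂` are embedded via `glue2 k` (hypothesis `hA₂`); these two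
embeddings partition `Fin (2*(n+1)+2)`, so they determine the glued edge involution `A`,
and the boundary cycle of the glued map is the concatenation of the two boundary cycles,
i.e. the standard rotation.  Then the resulting map — `A` together with the vertex
permutation `A⁻¹ * finRotate` — is a planted unicellular map with `n+1` edges and its
genus equals `g₁ + g₂`. -/
theorem stmt5 (n k g₁ g₂ : ℕ) (hk : k ≤ n)
    (u₁ : PUMap g₁ k) (u₂ : PUMap g₂ (n - k))
    (A : Equiv.Perm (Fin (2 * (n + 1) + 2)))
    (hA₁ : ∀ (i : Fin (2 * k + 2)) (x y : Fin (2 * (n + 1) + 2)),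
      (x : ℕ) = (i : ℕ) + 1 → (y : ℕ) = (u₁.α i : ℕ) + 1 → A x = y)
    (hA₂ : ∀ (i : Fin (2 * (n - k) + 2)) (x y : Fin (2 * (n + 1) + 2)),
      (x : ℕ) = glue2 k i → (y : ℕ) = glue2 k (u₂.α i) → A x = y) :
    IsPUMap (g₁ + g₂) (n + 1) A (A⁻¹ * finRotate (2 * (n + 1) + 2)) := by
  obtain ⟨h1inv, h1nf, h1rb, h1rot, h1g⟩ := u₁.prop
  obtain ⟨h2inv, h2nf, h2rb, h2rot, h2g⟩ := u₂.prop
  have hσ1 : ∀ x, u₁.σ x = u₁.α (finRotate (2 * k + 2) x) := by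
    intro x
    have h := congrArg (fun (p : Equiv.Perm (Fin (2 * k + 2))) => p x) h1rot
    simp only [Equiv.Perm.mul_apply] at h
    rw [← h, h1inv]
  have hσ2 : ∀ x, u₂.σ x = u₂.α (finRotate (2 * (n - k) + 2) x) := by
    intro x
    have h := congrArg (fun (p : Equiv.Perm (Fin (2 * (n - k) + 2))) => p x) h2rot
    simp only [Equiv.Perm.mul_apply] at h
    rw [← h, h2inv]
  -- A is a fixed-point-free involution
  have hAA : ∀ x, A (A x) = x := by
    intro x
    have hxlt := x.isLt
    rcases Nat.lt_or_ge x.val 1 with hx0 | hx1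
    · -- x = 0
      have hi : x.val = 0 := by omega
      set i : Fin (2 * (n - k) + 2) := ⟨0, by omega⟩ with hidef
      have e1 : A x = ⟨glue2 k (u₂.α i).val, glue2_lt hk (u₂.α i).isLt⟩ :=
        hA₂ i x _ (by rw [glue2_zero]; omega) rfl
      have e2 : A ⟨glue2 k (u₂.α i).val, glue2_lt hk (u₂.α i).isLt⟩ = x :=
        hA₂ (u₂.α i) _ x rfl (by rw [h2inv i]; rw [glue2_zero]; omega)
      rw [e1, e2]
    rcases Nat.lt_or_ge x.val (2 * k + 3) with hx2 | hx3
    · -- 1 ≤ x ≤ 2k+2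
      set i : Fin (2 * k + 2) := ⟨x.val - 1, by omega⟩ with hidef
      have e1 : A x = ⟨(u₁.α i).val + 1, by have := (u₁.α i).isLt; omega⟩ :=
        hA₁ i x _ (by simp [hidef]; omega) rfl
      have e2 : A ⟨(u₁.α i).val + 1, by have := (u₁.α i).isLt; omega⟩ = x :=
        hA₁ (u₁.α i) _ x rfl (by rw [h1inv i]; simp [hidef]; omega)
      rw [e1, e2]
    · -- 2k+3 ≤ x
      set i : Fin (2 * (n - k) + 2) := ⟨x.val - (2 * k + 2), by omega⟩ with hidef
      have e1 : A x = ⟨glue2 k (u₂.α i).val, glue2_lt hk (u₂.α i).isLt⟩ :=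
        hA₂ i x _ (by rw [glue2_pos k i.val (by simp [hidef]; omega)]; simp [hidef]; omega) rfl
      have e2 : A ⟨glue2 k (u₂.α i).val, glue2_lt hk (u₂.α i).isLt⟩ = x :=
        hA₂ (u₂.α i) _ x rfl
          (by rw [h2inv i, glue2_pos k i.val (by simp [hidef]; omega)]; simp [hidef]; omega)
      rw [e1, e2]
  have hfree : ∀ x, A x ≠ x := by
    intro x
    have hxlt := x.isLt
    rcases Nat.lt_or_ge x.val 1 with hx0 | hx1
    · set i : Fin (2 * (n - k) + 2) := ⟨0, by omega⟩ with hidef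
      have e1 : A x = ⟨glue2 k (u₂.α i).val, glue2_lt hk (u₂.α i).isLt⟩ :=
        hA₂ i x _ (by rw [glue2_zero]; omega) rfl
      intro h
      have hv : glue2 k (u₂.α i).val = x.val := congrArg Fin.val (e1 ▸ h)
      apply h2nf i
      apply Fin.ext
      have hval : (u₂.α i).val = 0 := by revert hv; unfold glue2; split <;> omega
      rw [hval]
    rcases Nat.lt_or_ge x.val (2 * k + 3) with hx2 | hx3
    · set i : Fin (2 * k + 2) := ⟨x.val - 1, by omega⟩ with hidef
      have e1 : A x = ⟨(u₁.α i).val + 1, by have := (u₁.α i).isLt; omega⟩ :=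
        hA₁ i x _ (by simp [hidef]; omega) rfl
      intro h
      have hv : (u₁.α i).val + 1 = x.val := congrArg Fin.val (e1 ▸ h)
      apply h1nf i
      apply Fin.ext
      show (u₁.α i).val = i.val
      have hiv : i.val = x.val - 1 := rfl
      omega
    · set i : Fin (2 * (n - k) + 2) := ⟨x.val - (2 * k + 2), by omega⟩ with hidef
      have e1 : A x = ⟨glue2 k (u₂.α i).val, glue2_lt hk (u₂.α i).isLt⟩ :=
        hA₂ i x _ (by rw [glue2_pos k i.val (by simp [hidef]; omega)]; simp [hidef]; omega) rfl
      intro h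
      have hv : glue2 k (u₂.α i).val = x.val := congrArg Fin.val (e1 ▸ h)
      apply h2nf i
      apply Fin.ext
      have hval : (u₂.α i).val = x.val - (2 * k + 2) := by revert hv; unfold glue2; split <;> omega
      show (u₂.α i).val = i.val
      have hiv : i.val = x.val - (2 * k + 2) := rfl
      omega
  have hA0 : A ⟨0, by omega⟩ = ⟨2 * (n + 1) + 1, by omega⟩ := by
    apply hA₂ ⟨0, by omega⟩ _ _ (by rw [glue2_zero])
    rw [h2rb]
    rw [glue2_pos k (2 * (n - k) + 1) (by omega)]
    show 2 * (n + 1) + 1 = 2 * (n - k) + 1 + (2 * k + 2)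
    omega
  -- conjugation: the vertex permutation is the glued sum with one swap
  set a : Fin (2 * k + 2) ⊕ Fin (2 * (n - k) + 2) := Sum.inl ⟨2 * k + 1, by omega⟩ with hadef
  set b : Fin (2 * k + 2) ⊕ Fin (2 * (n - k) + 2) := Sum.inr ⟨0, by omega⟩ with hbdef
  set s : Equiv.Perm (Fin (2 * k + 2) ⊕ Fin (2 * (n - k) + 2)) :=
    Equiv.Perm.sumCongr u₁.σ u₂.σ with hsdef
  have hAmul : A * A = 1 := Equiv.ext fun x => hAA x
  have hAinv : A⁻¹ = A := inv_eq_of_mul_eq_one_left hAmul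
  have hvrot : ∀ w : Fin (2 * (n + 1) + 2), w.val ≠ 2 * (n + 1) + 1 →
      ((finRotate (2 * (n + 1) + 2)) w).val = w.val + 1 := fun w hw => finRotate_val_ne w hw
  have hvlast : ∀ w : Fin (2 * (n + 1) + 2), w.val = 2 * (n + 1) + 1 →
      ((finRotate (2 * (n + 1) + 2)) w).val = 0 := fun w hw => finRotate_val_last w hw
  have hπconj : A⁻¹ * finRotate (2 * (n + 1) + 2)
      = (glueEquiv n k hk).permCongr (s * Equiv.swap a b) := by
    apply Equiv.ext
    intro x
    obtain ⟨z, rfl⟩ := (glueEquiv n k hk).surjective x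
    rw [Equiv.permCongr_apply, Equiv.symm_apply_apply, Equiv.Perm.mul_apply, hAinv]
    cases z with
    | inl i =>
      by_cases hi : i.val = 2 * k + 1
      · -- plant of u₁ : next half-edge is labelled 1 in u₂
        have hiz : Sum.inl i = a := by rw [hadef]; exact congrArg Sum.inl (Fin.ext hi)
        have hπ : (s * Equiv.swap a b) (Sum.inl i)
            = Sum.inr (u₂.σ ⟨0, by omega⟩) := by
          rw [Equiv.Perm.mul_apply, hiz, Equiv.swap_apply_left]
          rfl
        rw [hπ]
        set j : Fin (2 * (n - k) + 2) := ⟨1, by omega⟩ with hjdef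
        have hjv : j.val = 1 := rfl
        apply hA₂ j
        · rw [hvrot _ (by rw [glueEquiv_inl_val]; have := i.isLt; omega), glueEquiv_inl_val,
            glue2_pos k j.val (by omega)]
          omega
        · rw [glueEquiv_inr_val]
          have hsj : u₂.σ ⟨0, by omega⟩ = u₂.α j := by
            rw [hσ2]
            congr 1
          rw [hsj]
      · -- interior half-edge of u₁
        have hπ : (s * Equiv.swap a b) (Sum.inl i) = Sum.inl (u₁.σ i) := by
          rw [Equiv.Perm.mul_apply,
            Equiv.swap_apply_of_ne_of_ne (by simp [hadef, Fin.ext_iff]; exact hi) (by simp [hbdef])]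
          rfl
        rw [hπ]
        set j : Fin (2 * k + 2) := ⟨i.val + 1, by have := i.isLt; omega⟩ with hjdef
        have hjv : j.val = i.val + 1 := rfl
        apply hA₁ j
        · rw [hvrot _ (by rw [glueEquiv_inl_val]; have := i.isLt; omega), glueEquiv_inl_val]
        · rw [glueEquiv_inl_val]
          have hsj : u₁.σ i = u₁.α j := by
            rw [hσ1]
            congr 1
            apply Fin.ext
            rw [finRotate_val_ne i hi]
          rw [hsj]
    | inr i =>
      by_cases hi0 : i.val = 0
      · -- root of u₂ : next half-edge is the root of u₁
        have hiz : Sum.inr i = b := by rw [hbdef]; exact congrArg Sum.inr (Fin.ext hi0)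
        have hπ : (s * Equiv.swap a b) (Sum.inr i)
            = Sum.inl (u₁.σ ⟨2 * k + 1, by omega⟩) := by
          rw [Equiv.Perm.mul_apply, hiz, Equiv.swap_apply_right]
          rfl
        rw [hπ]
        set j : Fin (2 * k + 2) := ⟨0, by omega⟩ with hjdef
        have hjv : j.val = 0 := rfl
        have he0 : (glueEquiv n k hk (Sum.inr i) : ℕ) = 0 := by
          rw [glueEquiv_inr_val, hi0, glue2_zero]
        apply hA₁ j
        · rw [hvrot _ (by rw [he0]; omega), he0]
        · rw [glueEquiv_inl_val]
          have hsj : u₁.σ ⟨2 * k + 1, by omega⟩ = u₁.α j := by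
            rw [hσ1]
            congr 1
            apply Fin.ext
            rw [finRotate_val_last (⟨2 * k + 1, by omega⟩ : Fin (2 * k + 2)) rfl]
          rw [hsj]
      by_cases hil : i.val = 2 * (n - k) + 1
      · -- plant of u₂ : wraps around to the root of u₂
        have hπ : (s * Equiv.swap a b) (Sum.inr i) = Sum.inr (u₂.σ i) := by
          rw [Equiv.Perm.mul_apply,
            Equiv.swap_apply_of_ne_of_ne (by simp [hadef]) (by rw [hbdef]; intro h; exact hi0 (congrArg Fin.val (Sum.inr_injective h)))]
          rfl
        rw [hπ]
        set j : Fin (2 * (n - k) + 2) := ⟨0, by omega⟩ with hjdef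
        have hjv : j.val = 0 := rfl
        have he : (glueEquiv n k hk (Sum.inr i) : ℕ) = 2 * (n + 1) + 1 := by
          rw [glueEquiv_inr_val, glue2_pos k i.val hi0]
          omega
        apply hA₂ j
        · rw [hvlast _ (by rw [he]), hjv, glue2_zero]
        · rw [glueEquiv_inr_val]
          have hsj : u₂.σ i = u₂.α j := by
            rw [hσ2]
            congr 1
            apply Fin.ext
            rw [finRotate_val_last i hil]
          rw [hsj]
      · -- interior half-edge of u₂
        have hπ : (s * Equiv.swap a b) (Sum.inr i) = Sum.inr (u₂.σ i) := by
          rw [Equiv.Perm.mul_apply,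
            Equiv.swap_apply_of_ne_of_ne (by simp [hadef]) (by rw [hbdef]; intro h; exact hi0 (congrArg Fin.val (Sum.inr_injective h)))]
          rfl
        rw [hπ]
        set j : Fin (2 * (n - k) + 2) := ⟨i.val + 1, by have := i.isLt; omega⟩ with hjdef
        have hjv : j.val = i.val + 1 := rfl
        have he : (glueEquiv n k hk (Sum.inr i) : ℕ) = i.val + (2 * k + 2) := by
          rw [glueEquiv_inr_val, glue2_pos k i.val hi0]
        apply hA₂ j
        · rw [hvrot _ (by rw [he]; have := i.isLt; omega), he, glue2_pos k j.val (by omega)]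
          omega
        · rw [glueEquiv_inr_val]
          have hsj : u₂.σ i = u₂.α j := by
            rw [hσ2]
            congr 1
            apply Fin.ext
            rw [finRotate_val_ne i hil]
          rw [hsj]
  -- counting cycles
  have hsa : s a = a := by
    have h1 : u₁.σ ⟨2 * k + 1, by omega⟩ = ⟨2 * k + 1, by omega⟩ := by
      rw [hσ1]
      have hr : (finRotate (2 * k + 2)) ⟨2 * k + 1, by omega⟩ = ⟨0, by omega⟩ :=
        Fin.ext (by rw [finRotate_val_last (⟨2 * k + 1, by omega⟩ : Fin (2 * k + 2)) rfl])
      rw [hr, h1rb]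
    show Sum.inl (u₁.σ ⟨2 * k + 1, by omega⟩) = a
    rw [h1, hadef]
  have hab : a ≠ b := by simp [hadef, hbdef]
  have hcc1 : cycleCount (A⁻¹ * finRotate (2 * (n + 1) + 2))
      = cycleCount (s * Equiv.swap a b) := by
    rw [hπconj, cycleCount_permCongr]
  have hcc2 : cycleCount (s * Equiv.swap a b) + 1 = cycleCount s :=
    cycleCount_mul_swap s hab hsa
  have hcc3 : cycleCount s = cycleCount u₁.σ + cycleCount u₂.σ :=
    cycleCount_sumCongr _ _
  refine ⟨hAA, hfree, hA0, by rw [← mul_assoc, mul_inv_cancel, one_mul], ?_⟩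
  omega
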